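/- arXiv:2001.10699 — 4 statements merged into one kernel-verified Lean document; each statement's English description precedes it below -/
import Mathlib

section
/- Let n ≥ 1 and let w : Fin 4 → Fin n → ℤ be such that w(p,i) ≠ 0 for all p and i. For each p, write σ(p) = Σ_{i} w(p,i) and Π(p) = Π_{i} w(p,i). Assume that (i) for every integer k, Σ_{p : σ(p) = k} 1/Π(p) = 0 as a rational number, and (ii) Σ_p σ(p) = 0. Then one of the following holds: (1) σ(p) = 0 for all p, and Σ_p 1/Π(p) = 0; or (2) the four indices can be divided into two pairs (p1,p2) and (p3,p4) such that Π(p1) = −Π(p2), Π(p3) = −Π(p4), and σ(p1) = σ(p2) = −σ(p3) = −σ(p4). -/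
open Finset

lemma key (S : Fin 4 → ℤ) (f : Fin 4 → ℚ) (hf : ∀ p, f p ≠ 0)
    (h1 : ∀ k : ℤ, ∑ p ∈ univ.filter (fun p => S p = k), f p = 0)
    (h2 : ∑ p, S p = 0) (hne : ∃ p, S p ≠ 0) :
    ∃ p1 p2 p3 p4 : Fin 4, ({p1, p2, p3, p4} : Finset (Fin 4)) = univ ∧
      f p1 + f p2 = 0 ∧ f p3 + f p4 = 0 ∧
      S p1 = S p2 ∧ S p1 = -S p3 ∧ S p3 = S p4 := by
  -- partner lemma
  have partner : ∀ p : Fin 4, ∃ q, q ≠ p ∧ S q = S p := by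
    intro p
    by_contra h
    push_neg at h
    have hfil : univ.filter (fun q => S q = S p) = {p} := by
      apply Finset.eq_singleton_iff_unique_mem.mpr
      refine ⟨by simp, ?_⟩
      intro q hq
      simp only [mem_filter, mem_univ, true_and] at hq
      by_contra hne'
      exact (h q hne') hq
    have := h1 (S p)
    rw [hfil, Finset.sum_singleton] at this
    exact hf p this
  obtain ⟨p0, hp0⟩ := hne
  obtain ⟨q0, hq0ne, hq0⟩ := partner p0
  have hcard : (univ \ {p0, q0} : Finset (Fin 4)).card = 2 := by
    rw [Finset.card_sdiff_of_subset (by simp)]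
    rw [Finset.card_insert_of_notMem (by simp [hq0ne.symm]), Finset.card_singleton]
    rfl
  obtain ⟨r, s, hrs, hset⟩ := Finset.card_eq_two.mp hcard
  have hr : r ∈ univ \ ({p0, q0} : Finset (Fin 4)) := by rw [hset]; simp
  have hs : s ∈ univ \ ({p0, q0} : Finset (Fin 4)) := by rw [hset]; simp
  simp only [Finset.mem_sdiff, Finset.mem_insert, Finset.mem_singleton, Finset.mem_univ,
    true_and, not_or] at hr hs
  obtain ⟨hrp0, hrq0⟩ := hr
  obtain ⟨hsp0, hsq0⟩ := hs
  have huniv : ({p0, q0, r, s} : Finset (Fin 4)) = univ := by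
    apply Finset.eq_univ_of_forall
    intro t
    simp only [Finset.mem_insert, Finset.mem_singleton]
    by_cases h1t : t = p0
    · tauto
    by_cases h2t : t = q0
    · tauto
    have : t ∈ univ \ ({p0, q0} : Finset (Fin 4)) := by simp [h1t, h2t]
    rw [hset] at this
    simp at this
    tauto
  -- sum over univ decomposition
  have hsum : ∀ g : Fin 4 → ℤ, ∑ p, g p = g p0 + g q0 + g r + g s := by
    intro g
    rw [← huniv]
    rw [Finset.sum_insert (by simp [hq0ne.symm, Ne.symm hrp0, Ne.symm hsp0]),
      Finset.sum_insert (by simp [Ne.symm hrq0, Ne.symm hsq0]),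
      Finset.sum_insert (by simp [hrs]), Finset.sum_singleton]
    ring
  -- all-equal contradiction
  have hEZ : ¬(S r = S p0 ∧ S s = S p0) := by
    rintro ⟨h3, h4⟩
    have := hsum S
    rw [h2, hq0, h3, h4] at this
    omega
  have hrSne : S r ≠ S p0 := by
    intro h3
    apply hEZ
    refine ⟨h3, ?_⟩
    obtain ⟨t, htne, htS⟩ := partner s
    have : t ∈ ({p0, q0, r, s} : Finset (Fin 4)) := by rw [huniv]; simp
    simp only [Finset.mem_insert, Finset.mem_singleton] at this
    rcases this with h | h | h | h
    · rw [h] at htS; omega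
    · rw [h] at htS; rw [hq0] at htS; omega
    · rw [h] at htS; omega
    · exact absurd h htne
  have hsSne : S s ≠ S p0 := by
    intro h4
    apply hEZ
    obtain ⟨t, htne, htS⟩ := partner r
    have : t ∈ ({p0, q0, r, s} : Finset (Fin 4)) := by rw [huniv]; simp
    simp only [Finset.mem_insert, Finset.mem_singleton] at this
    rcases this with h | h | h | h
    · rw [h] at htS; omega
    · rw [h] at htS; rw [hq0] at htS; omega
    · exact absurd h htne
    · rw [h] at htS; omega
  -- r's partner is s
  have hsr : S s = S r := by
    obtain ⟨t, htne, htS⟩ := partner r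
    have : t ∈ ({p0, q0, r, s} : Finset (Fin 4)) := by rw [huniv]; simp
    simp only [Finset.mem_insert, Finset.mem_singleton] at this
    rcases this with h | h | h | h
    · rw [h] at htS; omega
    · rw [h] at htS; rw [hq0] at htS; omega
    · exact absurd h htne
    · rw [← h]; exact htS
  have hrneg : S r = -S p0 := by
    have := hsum S
    rw [h2, hq0, hsr] at this
    omega
  -- fibers
  have hfib1 : univ.filter (fun q => S q = S p0) = {p0, q0} := by
    ext t
    simp only [Finset.mem_filter, Finset.mem_univ, true_and, Finset.mem_insert,
      Finset.mem_singleton]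
    constructor
    · intro ht
      have : t ∈ ({p0, q0, r, s} : Finset (Fin 4)) := by rw [huniv]; simp
      simp only [Finset.mem_insert, Finset.mem_singleton] at this
      rcases this with h | h | h | h
      · exact Or.inl h
      · exact Or.inr h
      · rw [h] at ht; exact absurd ht hrSne
      · rw [h] at ht; exact absurd ht hsSne
    · rintro (h | h)
      · rw [h]
      · rw [h]; exact hq0
  have hfib2 : univ.filter (fun q => S q = S r) = {r, s} := by
    ext t
    simp only [Finset.mem_filter, Finset.mem_univ, true_and, Finset.mem_insert,
      Finset.mem_singleton]
    constructor
    · intro ht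
      have : t ∈ ({p0, q0, r, s} : Finset (Fin 4)) := by rw [huniv]; simp
      simp only [Finset.mem_insert, Finset.mem_singleton] at this
      rcases this with h | h | h | h
      · rw [h] at ht; omega
      · rw [h, hq0] at ht; omega
      · exact Or.inl h
      · exact Or.inr h
    · rintro (h | h)
      · rw [h]
      · rw [h]; exact hsr
  have hf1 := h1 (S p0)
  rw [hfib1, Finset.sum_insert (by simp [hq0ne.symm]), Finset.sum_singleton] at hf1
  have hf2 := h1 (S r)
  rw [hfib2, Finset.sum_insert (by simp [hrs]), Finset.sum_singleton] at hf2
  exact ⟨p0, q0, r, s, huniv, hf1, hf2, hq0.symm, by omega, hsr.symm⟩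

theorem stmt_1 (n : ℕ) (hn : 1 ≤ n) (w : Fin 4 → Fin n → ℤ)
    (hw : ∀ p i, w p i ≠ 0)
    (h1 : ∀ k : ℤ,
      ∑ p ∈ univ.filter (fun p => ∑ i, w p i = k), (1 : ℚ) / (∏ i, w p i : ℤ) = 0)
    (h2 : ∑ p, ∑ i, w p i = 0) :
    ((∀ p, ∑ i, w p i = 0) ∧ ∑ p, (1 : ℚ) / (∏ i, w p i : ℤ) = 0) ∨
    (∃ p1 p2 p3 p4 : Fin 4, ({p1, p2, p3, p4} : Finset (Fin 4)) = univ ∧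
      (∏ i, w p1 i) = -(∏ i, w p2 i) ∧
      (∏ i, w p3 i) = -(∏ i, w p4 i) ∧
      (∑ i, w p1 i) = (∑ i, w p2 i) ∧
      (∑ i, w p1 i) = -(∑ i, w p3 i) ∧
      (∑ i, w p3 i) = (∑ i, w p4 i)) := by
  have hPne : ∀ p, ((∏ i, w p i : ℤ) : ℚ) ≠ 0 := by
    intro p
    exact_mod_cast Finset.prod_ne_zero_iff.mpr (fun i _ => hw p i)
  have hfne : ∀ p, (1 : ℚ) / (∏ i, w p i : ℤ) ≠ 0 := fun p =>
    one_div_ne_zero (hPne p)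
  by_cases hall : ∀ p, ∑ i, w p i = 0
  · left
    refine ⟨hall, ?_⟩
    have := h1 0
    rwa [Finset.filter_true_of_mem (fun p _ => hall p)] at this
  · right
    push_neg at hall
    obtain ⟨p1, p2, p3, p4, huniv, hf1, hf2, hs1, hs2, hs3⟩ :=
      key (fun p => ∑ i, w p i) (fun p => (1 : ℚ) / (∏ i, w p i : ℤ)) hfne h1 h2 hall
    have key2 : ∀ x y : ℚ, x ≠ 0 → y ≠ 0 → 1 / x + 1 / y = 0 → x = -y := by
      intro x y hx hy h
      field_simp at h
      linarith
    refine ⟨p1, p2, p3, p4, huniv, ?_, ?_, hs1, hs2, hs3⟩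
    · exact_mod_cast key2 _ _ (hPne p1) (hPne p2) hf1
    · exact_mod_cast key2 _ _ (hPne p3) (hPne p4) hf2
end

section
/- There do not exist positive integers a1, a2, a3, a4, b2, b3, b4, c1 satisfying all of the following: a1 + a2 + a3 + a4 = −a1 + b2 + b3 + b4; a1 + a2 + a3 + a4 = a2 + a3 + b2 − c1; a1 + a2 + a3 + a4 = a4 + b3 + b4 + c1; a2·a3·a4 = b2·b3·b4; and a2·a3·b2 = a4·b3·b4. -/
theorem stmt_4 :
    ¬ ∃ a1 a2 a3 a4 b2 b3 b4 c1 : ℤ,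
      0 < a1 ∧ 0 < a2 ∧ 0 < a3 ∧ 0 < a4 ∧ 0 < b2 ∧ 0 < b3 ∧ 0 < b4 ∧ 0 < c1 ∧
      a1 + a2 + a3 + a4 = -a1 + b2 + b3 + b4 ∧
      a1 + a2 + a3 + a4 = a2 + a3 + b2 - c1 ∧
      a1 + a2 + a3 + a4 = a4 + b3 + b4 + c1 ∧
      a2 * a3 * a4 = b2 * b3 * b4 ∧
      a2 * a3 * b2 = a4 * b3 * b4 := by
  rintro ⟨a1, a2, a3, a4, b2, b3, b4, c1, h1, h2, h3, h4, h5, h6, h7, h8,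
    e1, e2, e3, p1, p2⟩
  -- b2 = a1 + a4 + c1 > a4
  have hb2 : b2 = a1 + a4 + c1 := by linarith
  -- (a2*a3)^2*(a4*b2) = (b3*b4)^2*(a4*b2)
  have key : (a2 * a3) ^ 2 * (a4 * b2) = (b3 * b4) ^ 2 * (a4 * b2) := by
    ring_nf
    nlinarith [p1, p2, mul_pos h2 h3, mul_pos h6 h7]
  have hab : (a2 * a3) ^ 2 = (b3 * b4) ^ 2 :=
    mul_right_cancel₀ (by positivity) key
  have heq : a2 * a3 = b3 * b4 := by
    have h0 : (a2 * a3 - b3 * b4) * (a2 * a3 + b3 * b4) = 0 := by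
      linear_combination hab
    rcases mul_eq_zero.mp h0 with h | h
    · linarith
    · nlinarith [mul_pos h2 h3, mul_pos h6 h7]
  -- a4 = b2
  have ha4 : a4 = b2 := by
    have : a2 * a3 * a4 = a2 * a3 * b2 := by rw [p1, heq]; ring
    exact mul_left_cancel₀ (by positivity) this
  linarith
end

section
/- There do not exist positive integers a1, a2, a3, a4, b2, b3, b4, c1 satisfying all of the following: a1 + a2 + a3 + a4 = −a1 + b2 + b3 + b4; a1 + a2 + a3 + a4 = a2 + b2 + b3 − c1; a1 + a2 + a3 + a4 = a3 + a4 + b4 + c1; a2·a3·a4 = b2·b3·b4; a2·b2·b3 = a3·a4·b4; and, in the rational numbers, σ2(a1,a2,a3,a4)/(a1·a2·a3·a4) + σ2(−a1,b2,b3,b4)/(−a1·b2·b3·b4) + σ2(c1,−a2,−b2,−b3)/(−a2·b2·b3·c1) + σ2(−c1,−a3,−a4,−b4)/(a3·a4·b4·c1) = 0, where σ2 denotes the second elementary symmetric polynomial in four variables. -/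
/-- The second elementary symmetric polynomial in four variables. -/
def sigma2 (w x y z : ℚ) : ℚ := w * x + w * y + w * z + x * y + x * z + y * z

theorem stmt_5 :
    ¬ ∃ a1 a2 a3 a4 b2 b3 b4 c1 : ℤ,
      0 < a1 ∧ 0 < a2 ∧ 0 < a3 ∧ 0 < a4 ∧ 0 < b2 ∧ 0 < b3 ∧ 0 < b4 ∧ 0 < c1 ∧
      a1 + a2 + a3 + a4 = -a1 + b2 + b3 + b4 ∧
      a1 + a2 + a3 + a4 = a2 + b2 + b3 - c1 ∧
      a1 + a2 + a3 + a4 = a3 + a4 + b4 + c1 ∧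
      a2 * a3 * a4 = b2 * b3 * b4 ∧
      a2 * b2 * b3 = a3 * a4 * b4 ∧
      sigma2 (a1 : ℚ) a2 a3 a4 / ((a1 : ℚ) * a2 * a3 * a4)
        + sigma2 (-(a1 : ℚ)) b2 b3 b4 / (-(a1 : ℚ) * b2 * b3 * b4)
        + sigma2 (c1 : ℚ) (-(a2 : ℚ)) (-(b2 : ℚ)) (-(b3 : ℚ))
            / (-(a2 : ℚ) * b2 * b3 * c1)
        + sigma2 (-(c1 : ℚ)) (-(a3 : ℚ)) (-(a4 : ℚ)) (-(b4 : ℚ))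
            / ((a3 : ℚ) * a4 * b4 * c1) = 0 := by
  rintro ⟨a1, a2, a3, a4, b2, b3, b4, c1, h1, h2, h3, h4, h5, h6, h7, h8,
    e1, e2, e3, e4, e5, heq⟩
  -- Step 1: a2 = b4
  have hp : a2 ^ 2 * (a3 * a4 * b2 * b3) = b4 ^ 2 * (a3 * a4 * b2 * b3) := by
    linear_combination (a2 * b2 * b3) * e4 + (b2 * b3 * b4) * e5
  have hK : (0 : ℤ) < a3 * a4 * b2 * b3 := by positivity
  have hsq : a2 ^ 2 = b4 ^ 2 := mul_right_cancel₀ hK.ne' hp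
  have hb4 : a2 = b4 := le_antisymm (by nlinarith) (by nlinarith)
  -- Step 2: c1 = a1
  have hc1 : c1 = a1 := by omega
  -- Step 3: b2 * b3 = a3 * a4
  have hP : b2 * b3 = a3 * a4 := by
    have h' : a2 * (b2 * b3) = a2 * (a3 * a4) := by
      linear_combination -e4 + (b2 * b3) * hb4
    exact mul_left_cancel₀ h2.ne' h'
  -- Step 4: b2 + b3 = 2 * a1 + a3 + a4
  have hS : b2 + b3 = 2 * a1 + a3 + a4 := by omega
  -- Cast to ℚ
  have hb4Q : (b4 : ℚ) = (a2 : ℚ) := by exact_mod_cast hb4.symm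
  have hc1Q : (c1 : ℚ) = (a1 : ℚ) := by exact_mod_cast hc1
  have hPQ : (b2 : ℚ) * (b3 : ℚ) = (a3 : ℚ) * (a4 : ℚ) := by exact_mod_cast hP
  have hSQ : (b2 : ℚ) + (b3 : ℚ) = 2 * (a1 : ℚ) + (a3 : ℚ) + (a4 : ℚ) := by
    exact_mod_cast hS
  rw [hb4Q, hc1Q] at heq
  simp only [sigma2] at heq
  have hA1 : (0 : ℚ) < (a1 : ℚ) := Int.cast_pos.mpr h1
  have hA2 : (0 : ℚ) < (a2 : ℚ) := Int.cast_pos.mpr h2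
  have hA3 : (0 : ℚ) < (a3 : ℚ) := Int.cast_pos.mpr h3
  have hA4 : (0 : ℚ) < (a4 : ℚ) := Int.cast_pos.mpr h4
  have hB2 : (0 : ℚ) < (b2 : ℚ) := Int.cast_pos.mpr h5
  have hB3 : (0 : ℚ) < (b3 : ℚ) := Int.cast_pos.mpr h6
  set A1 : ℚ := (a1 : ℚ)
  set A2 : ℚ := (a2 : ℚ)
  set A3 : ℚ := (a3 : ℚ)
  set A4 : ℚ := (a4 : ℚ)
  set B2 : ℚ := (b2 : ℚ)
  set B3 : ℚ := (b3 : ℚ)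
  -- Clear denominators in heq
  have heq2 : 2 * (A1 * A2 + A1 * A3 + A1 * A4 + A2 * A3 + A2 * A4 + A3 * A4) * (B2 * B3)
      - 2 * (-(A1 * A2) - A1 * B2 - A1 * B3 + A2 * B2 + A2 * B3 + B2 * B3) * (A3 * A4)
      = ((A1 * A2 + A1 * A3 + A1 * A4 + A2 * A3 + A2 * A4 + A3 * A4) / (A1 * A2 * A3 * A4) +
          (-A1 * B2 + -A1 * B3 + -A1 * A2 + B2 * B3 + B2 * A2 + B3 * A2) / (-A1 * B2 * B3 * A2) +
        (A1 * -A2 + A1 * -B2 + A1 * -B3 + -A2 * -B2 + -A2 * -B3 + -B2 * -B3) / (-A2 * B2 * B3 * A1) +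
      (-A1 * -A3 + -A1 * -A4 + -A1 * -A2 + -A3 * -A4 + -A3 * -A2 + -A4 * -A2) / (A3 * A4 * A2 * A1))
        * (A1 * A2 * A3 * A4 * B2 * B3) := by
    field_simp
    ring
  rw [heq, zero_mul] at heq2
  have contra : (0 : ℚ) = 4 * A1 * (A1 + A3 + A4) * (A3 * A4) := by
    linear_combination -heq2
      + (2 * (A1 * A2 + A1 * A3 + A1 * A4 + A2 * A3 + A2 * A4 + A3 * A4) - 2 * A3 * A4) * hPQ
      - 2 * (A2 - A1) * (A3 * A4) * hSQ
  nlinarith [mul_pos hA3 hA4, mul_pos hA1 (by linarith : (0:ℚ) < A1 + A3 + A4)]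
end

section
/- For all positive integers a, b, c, consider the four quadruples of integers W1 = (a, b, c, −b−c), W2 = (a, −b, −c, b+c), W3 = (−a, b, c, −b−c), W4 = (−a, −b, −c, b+c). For each j, let σk(Wj) denote the k-th elementary symmetric polynomial of the four entries of Wj and Π(Wj) their product. Then, as rational numbers: Σ_j σ1(Wj)⁴/Π(Wj) = 0, Σ_j σ1(Wj)²·σ2(Wj)/Π(Wj) = 0, Σ_j σ2(Wj)²/Π(Wj) = 0, Σ_j σ1(Wj)·σ3(Wj)/Π(Wj) = 4, and Σ_j σ4(Wj)/Π(Wj) = 4. -/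
/-- Elementary symmetric polynomials in four variables. -/
def e1 (w x y z : ℚ) : ℚ := w + x + y + z
def e2 (w x y z : ℚ) : ℚ := w * x + w * y + w * z + x * y + x * z + y * z
def e3 (w x y z : ℚ) : ℚ := w * x * y + w * x * z + w * y * z + x * y * z
def e4 (w x y z : ℚ) : ℚ := w * x * y * z

theorem stmt_9 (a b c : ℤ) (ha : 0 < a) (hb : 0 < b) (hc : 0 < c) :
    ∃ W : Fin 4 → (ℚ × ℚ × ℚ × ℚ),
      W 0 = ((a : ℚ), (b : ℚ), (c : ℚ), -((b : ℚ) + c)) ∧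
      W 1 = ((a : ℚ), -(b : ℚ), -(c : ℚ), (b : ℚ) + c) ∧
      W 2 = (-(a : ℚ), (b : ℚ), (c : ℚ), -((b : ℚ) + c)) ∧
      W 3 = (-(a : ℚ), -(b : ℚ), -(c : ℚ), (b : ℚ) + c) ∧
      (∑ j, (e1 (W j).1 (W j).2.1 (W j).2.2.1 (W j).2.2.2) ^ 4
          / e4 (W j).1 (W j).2.1 (W j).2.2.1 (W j).2.2.2 = 0) ∧
      (∑ j, (e1 (W j).1 (W j).2.1 (W j).2.2.1 (W j).2.2.2) ^ 2
          * e2 (W j).1 (W j).2.1 (W j).2.2.1 (W j).2.2.2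
          / e4 (W j).1 (W j).2.1 (W j).2.2.1 (W j).2.2.2 = 0) ∧
      (∑ j, (e2 (W j).1 (W j).2.1 (W j).2.2.1 (W j).2.2.2) ^ 2
          / e4 (W j).1 (W j).2.1 (W j).2.2.1 (W j).2.2.2 = 0) ∧
      (∑ j, (e1 (W j).1 (W j).2.1 (W j).2.2.1 (W j).2.2.2)
          * e3 (W j).1 (W j).2.1 (W j).2.2.1 (W j).2.2.2
          / e4 (W j).1 (W j).2.1 (W j).2.2.1 (W j).2.2.2 = 4) ∧
      (∑ j, (e4 (W j).1 (W j).2.1 (W j).2.2.1 (W j).2.2.2)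
          / e4 (W j).1 (W j).2.1 (W j).2.2.1 (W j).2.2.2 = 4) := by
  refine ⟨![((a : ℚ), (b : ℚ), (c : ℚ), -((b : ℚ) + c)),
           ((a : ℚ), -(b : ℚ), -(c : ℚ), (b : ℚ) + c),
           (-(a : ℚ), (b : ℚ), (c : ℚ), -((b : ℚ) + c)),
           (-(a : ℚ), -(b : ℚ), -(c : ℚ), (b : ℚ) + c)],
    rfl, rfl, rfl, rfl, ?_, ?_, ?_, ?_, ?_⟩ <;>
  · have ha' : (0 : ℚ) < (a : ℚ) := by exact_mod_cast ha
    have hb' : (0 : ℚ) < (b : ℚ) := by exact_mod_cast hb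
    have hc' : (0 : ℚ) < (c : ℚ) := by exact_mod_cast hc
    have hd : ((a : ℚ) * b * c * ((b : ℚ) + c)) ≠ 0 := by positivity
    have k1 : (a : ℚ) * (b : ℚ) * (c : ℚ) * (-((b : ℚ) + c))
        = -((a : ℚ) * b * c * ((b : ℚ) + c)) := by ring
    have k2 : (a : ℚ) * (-(b : ℚ)) * (-(c : ℚ)) * ((b : ℚ) + c)
        = (a : ℚ) * b * c * ((b : ℚ) + c) := by ring
    have k3 : (-(a : ℚ)) * (b : ℚ) * (c : ℚ) * (-((b : ℚ) + c))
        = (a : ℚ) * b * c * ((b : ℚ) + c) := by ring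
    have k4 : (-(a : ℚ)) * (-(b : ℚ)) * (-(c : ℚ)) * ((b : ℚ) + c)
        = -((a : ℚ) * b * c * ((b : ℚ) + c)) := by ring
    simp only [Fin.sum_univ_four, Matrix.cons_val_zero, Matrix.cons_val_one, Matrix.head_cons,
      Matrix.cons_val_two, Matrix.tail_cons, Matrix.cons_val_three, e1, e2, e3, e4]
    rw [k1, k2, k3, k4]
    simp only [div_neg, neg_neg]
    field_simp
    ring
end
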